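/- Let p > n be a prime. For all but at most O(p^{⌊n/2⌋+1}) monic polynomials f ∈ F_p[X] of degree n, the polynomials f_{u,v}(X) = u^n f(u^{-1}(X+v)), as (u,v) ranges over F_p* × F_p, are pairwise distinct. -/

import Mathlib

open Polynomial

lemma ncard_le_of_injOn {α β : Type*} [Fintype β] (S : Set α) (Φ : α → β)
    (h : Set.InjOn Φ S) : S.ncard ≤ Fintype.card β := by
  classical
  calc S.ncard = (Φ '' S).ncard := (Set.ncard_image_of_injOn h).symm
    _ ≤ (Set.univ : Set β).ncard := Set.ncard_le_ncard (Set.subset_univ _) Set.finite_univ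
    _ = Fintype.card β := by simp [Set.ncard_univ, Nat.card_eq_fintype_card]

lemma coeff_comp_C_mul_X {R : Type*} [CommRing R] (g : R[X]) (b : R) (k : ℕ) :
    (g.comp (C b * X)).coeff k = g.coeff k * b ^ k := by
  rw [comp_eq_sum_left, Polynomial.sum_def, finset_sum_coeff]
  have : ∀ e ∈ g.support, (C (g.coeff e) * (C b * X) ^ e).coeff k
      = if e = k then g.coeff e * b ^ e else 0 := by
    intro e _
    rw [mul_pow, ← C_pow, ← mul_assoc, ← C_mul, C_mul_X_pow_eq_monomial, coeff_monomial]
  rw [Finset.sum_congr rfl this, Finset.sum_ite_eq' g.support k (fun e => g.coeff e * b ^ e)]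
  by_cases h : k ∈ g.support
  · simp [h]
  · simp [h, Polynomial.notMem_support_iff.mp h]

noncomputable def Aop (p n : ℕ) (w : (ZMod p)ˣ × ZMod p) (f : Polynomial (ZMod p)) : Polynomial (ZMod p) :=
  C ((w.1 : ZMod p) ^ n) * f.comp (C ((w.1⁻¹ : (ZMod p)ˣ) : ZMod p) * (X + C w.2))

lemma lin_comp {K : Type*} [Field K] (b b' v v' : K) (hb : b ≠ 0) :
    (C b' * (X + C v')).comp (C b * (X + C v)) = C (b' * b) * (X + C (v + b⁻¹ * v')) := by
  have h : C b * C b⁻¹ = (1 : K[X]) := by rw [← C_mul, mul_inv_cancel₀ hb, C_1]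
  simp only [mul_comp, add_comp, X_comp, C_comp, C_add, C_mul]
  linear_combination (-(C b' * C v')) * h

lemma Aop_one (p n : ℕ) [Fact p.Prime] (f : Polynomial (ZMod p)) : Aop p n (1, 0) f = f := by
  simp [Aop]

lemma Aop_comp (p n : ℕ) [Fact p.Prime] (f : Polynomial (ZMod p)) (u u' : (ZMod p)ˣ)
    (v v' : ZMod p) :
    Aop p n (u, v) (Aop p n (u', v') f) = Aop p n (u * u', v + (u : ZMod p) * v') f := by
  unfold Aop
  dsimp only
  have h1 : ((u'⁻¹ : (ZMod p)ˣ) : ZMod p) * ((u⁻¹ : (ZMod p)ˣ) : ZMod p)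
      = (((u * u')⁻¹ : (ZMod p)ˣ) : ZMod p) := by
    rw [← Units.val_mul]
    exact congrArg Units.val (mul_inv_rev u u').symm
  have h2 : (((u⁻¹ : (ZMod p)ˣ) : ZMod p))⁻¹ = (u : ZMod p) := by
    rw [Units.val_inv_eq_inv_val, inv_inv]
  rw [mul_comp, C_comp, comp_assoc, ← mul_assoc, ← C_mul,
    lin_comp _ _ _ _ (Units.ne_zero _), h1, h2, ← mul_pow, ← Units.val_mul]

lemma exists_fixed (p n : ℕ) [Fact p.Prime] (f : Polynomial (ZMod p))
    (hni : ¬ Function.Injective (fun w : (ZMod p)ˣ × ZMod p => Aop p n w f)) :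
    ∃ s : (ZMod p)ˣ, ∃ t : ZMod p, ¬ (s = 1 ∧ t = 0) ∧ f = Aop p n (s, t) f := by
  rw [Function.Injective] at hni; push_neg at hni
  obtain ⟨w, w', hEq, hne⟩ := hni
  refine ⟨w'.1⁻¹ * w.1, -(↑w'.1⁻¹ : ZMod p) * w'.2 + (↑w'.1⁻¹ : ZMod p) * w.2, ?_, ?_⟩
  · rintro ⟨h1, h2⟩
    apply hne
    have e1 : w.1 = w'.1 := (inv_mul_eq_one.mp h1).symm
    have e2 : w.2 = w'.2 := by
      have h3 : (↑w'.1⁻¹ : ZMod p) * (w.2 - w'.2) = 0 := by linear_combination h2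
      rcases mul_eq_zero.mp h3 with h | h
      · exact absurd h (Units.ne_zero _)
      · exact sub_eq_zero.mp h
    exact Prod.ext e1 e2
  · calc f = Aop p n (1, 0) f := (Aop_one p n f).symm
      _ = Aop p n (w'.1⁻¹ * w'.1, (-(↑w'.1⁻¹ : ZMod p) * w'.2) + (↑w'.1⁻¹ : ZMod p) * w'.2) f := by
          rw [show (-(↑w'.1⁻¹ : ZMod p) * w'.2) + (↑w'.1⁻¹ : ZMod p) * w'.2 = 0 by ring,
            inv_mul_cancel]
      _ = Aop p n (w'.1⁻¹, -(↑w'.1⁻¹ : ZMod p) * w'.2) (Aop p n (w'.1, w'.2) f) := by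
          rw [Aop_comp]
      _ = Aop p n (w'.1⁻¹, -(↑w'.1⁻¹ : ZMod p) * w'.2) (Aop p n (w.1, w.2) f) := by
          rw [show (w'.1, w'.2) = w' from rfl, show (w.1, w.2) = w from rfl, hEq]
      _ = Aop p n (w'.1⁻¹ * w.1, -(↑w'.1⁻¹ : ZMod p) * w'.2 + (↑w'.1⁻¹ : ZMod p) * w.2) f := by
          rw [Aop_comp]

lemma t_eq_zero (p n : ℕ) [Fact p.Prime] (hn : 0 < n) (hnp : n < p) (f : Polynomial (ZMod p))
    (hm : f.Monic) (hdeg : f.natDegree = n) (t : ZMod p) (h : f = Aop p n (1, t) f) :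
    t = 0 := by
  have hA : Aop p n (1, t) f = taylor t f := by
    simp [Aop, taylor_apply, add_comm]
  rw [hA] at h
  have hc := congrArg (fun g => coeff g (n - 1)) h
  simp only [taylor_coeff] at hc
  set D := hasseDeriv (n - 1) f with hD
  have hdle : D.natDegree < 2 := by
    have h2 := natDegree_hasseDeriv_le f (n - 1)
    rw [hdeg] at h2
    rw [hD]
    omega
  have heval : D.eval t = D.coeff 0 + D.coeff 1 * t := by
    rw [eval_eq_sum_range' hdle]
    simp [Finset.sum_range_succ]
  have hD0 : D.coeff 0 = f.coeff (n - 1) := by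
    rw [hD, hasseDeriv_coeff]
    simp
  have hD1 : D.coeff 1 = (n : ZMod p) := by
    rw [hD, hasseDeriv_coeff]
    have h1 : 1 + (n - 1) = n := by omega
    have h2 : n.choose (n - 1) = n := by
      calc n.choose (n - 1) = n.choose 1 := Nat.choose_symm (by omega)
        _ = n := Nat.choose_one_right n
    rw [h1, h2, show f.coeff n = 1 by rw [← hdeg]; exact hm.coeff_natDegree, mul_one]
  rw [heval, hD0, hD1] at hc
  have hnt : (n : ZMod p) * t = 0 := by linear_combination -hc
  have hn0 : (n : ZMod p) ≠ 0 := by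
    intro h0
    have := (ZMod.natCast_eq_zero_iff n p).mp h0
    have := Nat.le_of_dvd hn this
    omega
  rcases mul_eq_zero.mp hnt with h' | h'
  · exact absurd h' hn0
  · exact h'

lemma cert (p n : ℕ) [Fact p.Prime] (hn : 2 ≤ n) (hnp : n < p) (f : Polynomial (ZMod p))
    (hm : f.Monic) (hdeg : f.natDegree = n)
    (hni : ¬ Function.Injective (fun w : (ZMod p)ˣ × ZMod p => Aop p n w f)) :
    ∃ q : ℕ, 2 ≤ q ∧ q ≤ n ∧ ∃ x0 : ZMod p,
      ∀ k < n, ¬ q ∣ (n - k) → (taylor x0 f).coeff k = 0 := by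
  obtain ⟨s, t, hst, hfix⟩ := exists_fixed p n f hni
  have hs1 : s ≠ 1 := by
    intro h
    subst h
    exact hst ⟨rfl, t_eq_zero p n (by omega) hnp f hm hdeg t hfix⟩
  set a : ZMod p := (s : ZMod p) with ha
  have ha0 : a ≠ 0 := Units.ne_zero s
  have ha1 : a ≠ 1 := fun h => hs1 (Units.ext (by rw [← ha] at *; rw [h, Units.val_one]))
  set x0 : ZMod p := (a - 1)⁻¹ * t with hx0def
  have hx0 : a * x0 = x0 + t := by
    have hsub : a - 1 ≠ 0 := sub_ne_zero.mpr ha1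
    rw [hx0def]
    have e : a * ((a - 1)⁻¹ * t) = (a - 1) * (a - 1)⁻¹ * t + (a - 1)⁻¹ * t := by ring
    rw [e, mul_inv_cancel₀ hsub, one_mul, add_comm]
  have hfix' : f = C (a ^ n) * f.comp (C a⁻¹ * (X + C t)) := by
    rw [ha]
    rw [← Units.val_inv_eq_inv_val]
    exact hfix
  set g : Polynomial (ZMod p) := taylor x0 f with hg
  have e1 : g = f.comp (X + C x0) := by rw [hg, taylor_apply]
  have hinner : a⁻¹ * (x0 + t) = x0 := by
    rw [← hx0, inv_mul_cancel_left₀ ha0]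
  have hG : g = C (a ^ n) * g.comp (C a⁻¹ * X) := by
    calc g = f.comp (X + C x0) := e1
      _ = (C (a ^ n) * f.comp (C a⁻¹ * (X + C t))).comp (X + C x0) := by rw [← hfix']
      _ = C (a ^ n) * f.comp ((C a⁻¹ * (X + C t)).comp (X + C x0)) := by
          rw [mul_comp, C_comp, comp_assoc]
      _ = C (a ^ n) * f.comp (C a⁻¹ * X + C x0) := by
          congr 1
          simp only [mul_comp, add_comp, X_comp, C_comp]
          congr 1
          calc C a⁻¹ * (X + C x0 + C t) = C a⁻¹ * X + C (a⁻¹ * (x0 + t)) := by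
                simp only [C_mul, C_add]; ring
            _ = C a⁻¹ * X + C x0 := by rw [hinner]
      _ = C (a ^ n) * (f.comp (X + C x0)).comp (C a⁻¹ * X) := by
          rw [comp_assoc]
          congr 2
          simp [add_comp]
      _ = C (a ^ n) * g.comp (C a⁻¹ * X) := by rw [← e1]
  have hcoe : ∀ k, k ≤ n → a ^ (n - k) ≠ 1 → g.coeff k = 0 := by
    intro k hk hne
    have hck := congrArg (fun q => q.coeff k) hG
    simp only [coeff_C_mul, coeff_comp_C_mul_X] at hck
    have hpow : a ^ n * a⁻¹ ^ k = a ^ (n - k) := by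
      rw [inv_pow, ← pow_sub₀ a ha0 hk]
    have hz : g.coeff k * (a ^ (n - k) - 1) = 0 := by
      have : g.coeff k * (a ^ n * a⁻¹ ^ k) = g.coeff k := by linear_combination -hck
      rw [hpow] at this
      linear_combination this
    rcases mul_eq_zero.mp hz with h' | h'
    · exact h'
    · exact absurd (by linear_combination h') hne
  have hd1 : orderOf s ≠ 1 := fun h => hs1 (orderOf_eq_one_iff.mp h)
  have key : ∀ k < n, ¬ (orderOf s).minFac ∣ (n - k) → g.coeff k = 0 := by
    intro k hk hdvd
    apply hcoe k (le_of_lt hk)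
    intro hpow1
    have hs : s ^ (n - k) = 1 := by
      apply Units.ext
      rw [Units.val_pow_eq_pow_val, Units.val_one, ← ha, hpow1]
    exact hdvd (dvd_trans (Nat.minFac_dvd _) (orderOf_dvd_of_pow_eq_one hs))
  by_cases hq : (orderOf s).minFac ≤ n
  · exact ⟨(orderOf s).minFac, (Nat.minFac_prime hd1).two_le, hq, x0, key⟩
  · refine ⟨2, le_refl 2, hn, x0, fun k hk _ => key k hk ?_⟩
    intro hdvd
    have := Nat.le_of_dvd (by omega) hdvd
    omega


/-- Let `p > n` be a prime. For all but at most `O(p^(⌊n/2⌋+1))` monic polynomials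
`f ∈ 𝔽_p[X]` of degree `n`, the polynomials `f_{u,v}(X) = u^n f(u⁻¹(X+v))`, as `(u,v)` ranges
over `𝔽_p* × 𝔽_p`, are pairwise distinct. The implied constant depends only on `n`. -/
theorem fuv_pairwise_distinct_outside_small_set (n : ℕ) :
    ∃ C : ℕ, ∀ p : ℕ, p.Prime → n < p →
      Set.ncard {f : Polynomial (ZMod p) | f.Monic ∧ f.natDegree = n ∧
        ¬ Function.Injective (fun w : (ZMod p)ˣ × ZMod p =>
            Polynomial.C ((w.1 : ZMod p) ^ n) *
              f.comp (Polynomial.C ((w.1⁻¹ : (ZMod p)ˣ) : ZMod p)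
                * (Polynomial.X + Polynomial.C w.2)))} ≤ C * p ^ (n / 2 + 1) := by
  classical
  refine ⟨n + 2, fun p hp hnp => ?_⟩
  haveI : Fact p.Prime := ⟨hp⟩
  set Bad : Set (Polynomial (ZMod p)) := {f : Polynomial (ZMod p) | f.Monic ∧ f.natDegree = n ∧
        ¬ Function.Injective (fun w : (ZMod p)ˣ × ZMod p =>
            Polynomial.C ((w.1 : ZMod p) ^ n) *
              f.comp (Polynomial.C ((w.1⁻¹ : (ZMod p)ˣ) : ZMod p)
                * (Polynomial.X + Polynomial.C w.2)))} with hBad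
  by_cases hn : n ≤ 2
  · -- trivial case: bound by all monic polynomials of degree n
    have h1 : Bad.ncard ≤ Fintype.card (Fin n → ZMod p) := by
      apply ncard_le_of_injOn Bad (fun f (i : Fin n) => f.coeff (i : ℕ))
      intro f hf f' hf' hΦ
      have hm := hf.1
      have hdeg := hf.2.1
      have hm' := hf'.1
      have hdeg' := hf'.2.1
      ext k
      rcases lt_trichotomy k n with hk | hk | hk
      · exact congrFun hΦ ⟨k, hk⟩
      · have e1 : f.coeff k = 1 := by rw [hk, ← hdeg]; exact hm.coeff_natDegree
        have e2 : f'.coeff k = 1 := by rw [hk, ← hdeg']; exact hm'.coeff_natDegree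
        rw [e1, e2]
      · rw [coeff_eq_zero_of_natDegree_lt (by omega : f.natDegree < k),
          coeff_eq_zero_of_natDegree_lt (by omega : f'.natDegree < k)]
    have h2 : Fintype.card (Fin n → ZMod p) = p ^ n := by
      simp [ZMod.card]
    have h3 : p ^ n ≤ p ^ (n / 2 + 1) := Nat.pow_le_pow_right hp.pos (by omega)
    calc Bad.ncard ≤ p ^ n := by rw [← h2]; exact h1
      _ ≤ p ^ (n / 2 + 1) := h3
      _ ≤ (n + 2) * p ^ (n / 2 + 1) := Nat.le_mul_of_pos_left _ (by omega)
  · push_neg at hn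
    have hn2 : 2 ≤ n := by omega
    have hcert : ∀ f ∈ Bad, ∃ qx : ℕ × ZMod p, (2 ≤ qx.1 ∧ qx.1 ≤ n) ∧
        ∀ k < n, ¬ qx.1 ∣ (n - k) → (taylor qx.2 f).coeff k = 0 := by
      intro f hf
      obtain ⟨hm, hdeg, hni⟩ := hf
      obtain ⟨q, h2q, hqn, x0, hP⟩ := cert p n hn2 hnp f hm hdeg hni
      exact ⟨(q, x0), ⟨h2q, hqn⟩, hP⟩
    choose! F hF1 hF2 using hcert
    set Φ : Polynomial (ZMod p) → Fin (n + 1) × ZMod p × (Fin (n / 2) → ZMod p) :=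
      fun f => (⟨min (F f).1 n, by omega⟩, (F f).2,
        fun j => (taylor (F f).2 f).coeff (n - (F f).1 * ((j : ℕ) + 1))) with hΦdef
    have hinj : Set.InjOn Φ Bad := by
      intro f hf f' hf' hΦ
      have hm := hf.1
      have hdeg := hf.2.1
      have hm' := hf'.1
      have hdeg' := hf'.2.1
      have hq1 := (hF1 f hf).1
      have hq2 := (hF1 f hf).2
      have hq1' := (hF1 f' hf').1
      have hq2' := (hF1 f' hf').2
      have h1 : (F f').1 = (F f).1 := by
        have := congrArg (fun z => (z.1 : ℕ)) hΦ
        simp only [hΦdef] at this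
        omega
      have h2 : (F f').2 = (F f).2 := by
        have := congrArg (fun z => z.2.1) hΦ
        simpa [hΦdef] using this.symm
      set q := (F f).1 with hqdef
      set x0 := (F f).2 with hxdef
      have h3 : ∀ j : Fin (n / 2),
          (taylor x0 f).coeff (n - q * ((j : ℕ) + 1))
            = (taylor x0 f').coeff (n - q * ((j : ℕ) + 1)) := by
        intro j
        have := congrFun (congrArg (fun z => z.2.2) hΦ) j
        simpa [hΦdef, h1, h2] using this
      have htay : taylor x0 f = taylor x0 f' := by
        ext k
        rcases lt_trichotomy k n with hk | hk | hk
        · by_cases hdvd : q ∣ (n - k)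
          · obtain ⟨m, hmm⟩ := hdvd
            have hm1 : 1 ≤ m := by
              rcases Nat.eq_zero_or_pos m with h | h
              · rw [h, mul_zero] at hmm; omega
              · exact h
            have hmn : q * m ≤ n := by omega
            have e1 : m ≤ n / q := (Nat.le_div_iff_mul_le (by omega)).mpr
              (by rw [mul_comm]; omega)
            have e2 : n / q ≤ n / 2 := Nat.div_le_div_left hq1 (by norm_num)
            have hmlt : m - 1 < n / 2 := by omega
            have := h3 ⟨m - 1, hmlt⟩
            have hkey : n - q * (m - 1 + 1) = k := by
              have : q * (m - 1 + 1) = q * m := by congr 1; omega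
              omega
            rwa [hkey] at this
          · rw [hF2 f hf k hk hdvd, ← h2, hF2 f' hf' k hk (by rw [h1]; exact hdvd)]
        · have d1 : (taylor x0 f).natDegree = n := by rw [natDegree_taylor, hdeg]
          have d2 : (taylor x0 f').natDegree = n := by rw [natDegree_taylor, hdeg']
          have m1 : (taylor x0 f).Monic := by
            rw [taylor_apply]
            exact hm.comp (monic_X_add_C x0) (by simp)
          have m2 : (taylor x0 f').Monic := by
            rw [taylor_apply]
            exact hm'.comp (monic_X_add_C x0) (by simp)
          have e1 : (taylor x0 f).coeff k = 1 := by rw [hk, ← d1]; exact m1.coeff_natDegree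
          have e2 : (taylor x0 f').coeff k = 1 := by rw [hk, ← d2]; exact m2.coeff_natDegree
          rw [e1, e2]
        · rw [coeff_eq_zero_of_natDegree_lt (by rw [natDegree_taylor, hdeg]; omega),
            coeff_eq_zero_of_natDegree_lt (by rw [natDegree_taylor, hdeg']; omega)]
      exact taylor_injective x0 htay
    have hcard : Fintype.card (Fin (n + 1) × ZMod p × (Fin (n / 2) → ZMod p))
        = (n + 1) * (p * p ^ (n / 2)) := by
      simp [ZMod.card]
    calc Bad.ncard ≤ (n + 1) * (p * p ^ (n / 2)) := by
          rw [← hcard]; exact ncard_le_of_injOn Bad Φ hinj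
      _ ≤ (n + 2) * p ^ (n / 2 + 1) := by
          rw [pow_succ]
          nlinarith [pow_pos hp.pos (n / 2)]
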